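/- Removing the inscribed ball B(b, r) from the unbounded cone Cone(a, b, r) with 0 < r < ‖b − a‖ disconnects it: Cone(a, b, r) \ B(b, r) is the disjoint union of a bounded component containing the apex a and an unbounded component, and any continuous path in Cone(a, b, r) from a point in the bounded component to a point in the unbounded component must intersect B(b, r). -/

import Mathlib

open Real Metric Set
open scoped RealInnerProductSpace

noncomputable section

abbrev E2 := EuclideanSpace ℝ (Fin 2)

/-- Unit forward direction vector of orientation `θ`. -/
def uvec (θ : ℝ) : E2 := WithLp.toLp 2 ![Real.cos θ, Real.sin θ]

/-- Unit normal (perpendicular) vector of orientation `θ`. -/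
def nvec (θ : ℝ) : E2 := WithLp.toLp 2 ![-Real.sin θ, Real.cos θ]

/-- Two-argument arctangent, `atan2 y x`. -/
def atan2 (y x : ℝ) : ℝ := Complex.arg (x + y * Complex.I)

/-- The (unbounded) cone with apex `a`, base point `b`, and base radius `r`. -/
def cone (a b : E2) (r : ℝ) : Set E2 :=
  {p | ∃ α : ℝ, 0 ≤ α ∧ ∃ z ∈ closedBall b r, p = a + α • (z - a)}

/-- The half-plane bounded at `a` pointing towards `b`. -/
def hplane (a b : E2) : Set E2 := {z | 0 ≤ ⟪b - a, z - a⟫}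

/-- The bounded ice-cream cone with apex `a`, base point `b`, and radius `r`. -/
def icone (a b : E2) (r : ℝ) : Set E2 := convexHull ℝ ({a} ∪ closedBall b r)

lemma cone_angle (a b : E2) (r : ℝ) (h0 : 0 < r) (h1 : r < ‖b - a‖)
    {z : E2} (hz : z ∈ cone a b r) :
    (‖b - a‖^2 - r^2) * ‖z - a‖^2 ≤ ⟪b - a, z - a⟫^2 ∧ 0 ≤ ⟪b - a, z - a⟫ := by
  obtain ⟨α, hα, w, hw, rfl⟩ := hz
  have hw' : ‖w - b‖ ≤ r := by
    rw [mem_closedBall, dist_eq_norm] at hw; exact hw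
  have hwa : w - a = (w - b) + (b - a) := by abel
  have hCS : ⟪b - a, w - b⟫ ≤ ‖b - a‖ * ‖w - b‖ := real_inner_le_norm _ _
  have hCS2 : ⟪b - a, w - b⟫^2 ≤ ‖b - a‖^2 * ‖w - b‖^2 := by
    have := abs_real_inner_le_norm (b - a) (w - b)
    nlinarith [abs_nonneg ⟪b - a, w - b⟫, sq_abs ⟪b - a, w - b⟫, norm_nonneg (b-a), norm_nonneg (w-b)]
  have hnorm : ‖w - a‖^2 = ‖w - b‖^2 + 2 * ⟪b - a, w - b⟫ + ‖b - a‖^2 := by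
    rw [hwa, norm_add_sq_real, real_inner_comm]
  have hinner : ⟪b - a, w - a⟫ = ⟪b - a, w - b⟫ + ‖b - a‖^2 := by
    rw [hwa, inner_add_right, real_inner_self_eq_norm_sq]
  have hd : 0 < ‖b - a‖ := h0.trans h1
  have key : (‖b - a‖^2 - r^2) * ‖w - a‖^2 ≤ ⟪b - a, w - a⟫^2 := by
    rw [hnorm, hinner]
    have he : ‖w - b‖^2 ≤ r^2 := by nlinarith [norm_nonneg (w - b)]
    nlinarith [sq_nonneg (⟪b - a, w - b⟫ + r^2),
      mul_nonneg (by nlinarith : (0:ℝ) ≤ r^2 - ‖w - b‖^2) (by nlinarith : (0:ℝ) ≤ ‖b - a‖^2 - r^2)]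
  have hpos : 0 < ⟪b - a, w - a⟫ := by
    rw [hinner]
    nlinarith [neg_abs_le ⟪b - a, w - b⟫, abs_real_inner_le_norm (b - a) (w - b)]
  have hsimp : a + α • (w - a) - a = α • (w - a) := by abel
  rw [hsimp, inner_smul_right, norm_smul, Real.norm_eq_abs, abs_of_nonneg hα]
  constructor
  · have := key
    nlinarith [sq_nonneg α, mul_pos hd hd]
  · positivity

/-- Removing the inscribed ball from the cone disconnects it into a bounded
component containing the apex and an unbounded component, and any continuous
path in the cone between the two components must meet the ball. -/
theorem stmt_12 (a b : E2) (r : ℝ) (h0 : 0 < r) (h1 : r < ‖b - a‖) :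
    ∃ U V : Set E2,
      cone a b r \ closedBall b r = U ∪ V ∧ Disjoint U V ∧
      a ∈ U ∧ Bornology.IsBounded U ∧ ¬ Bornology.IsBounded V ∧
      ∀ f : ℝ → E2, ContinuousOn f (Set.Icc 0 1) →
        (∀ t ∈ Set.Icc (0 : ℝ) 1, f t ∈ cone a b r) →
        f 0 ∈ U → f 1 ∈ V → ∃ t ∈ Set.Icc (0 : ℝ) 1, f t ∈ closedBall b r := by
  set s : ℝ := ‖b - a‖^2 - r^2 with hs_def
  have hd : 0 < ‖b - a‖ := h0.trans h1
  have hs : 0 < s := by nlinarith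
  -- points of the cone at inner-level s lie in the ball
  have hlevel : ∀ z ∈ cone a b r, ⟪b - a, z - a⟫ = s → z ∈ closedBall b r := by
    intro z hz he
    obtain ⟨hang, _⟩ := cone_angle a b r h0 h1 hz
    rw [he] at hang
    have hza : ‖z - a‖^2 ≤ s := by nlinarith
    have hzb : z - b = (z - a) - (b - a) := by abel
    have heq : ‖z - b‖^2 = ‖z - a‖^2 - 2 * ⟪b - a, z - a⟫ + ‖b - a‖^2 := by
      rw [hzb, norm_sub_sq_real, real_inner_comm]
    rw [mem_closedBall, dist_eq_norm]
    have h2 : ‖z - b‖^2 ≤ r^2 := by rw [heq, he]; linarith [hs_def]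
    nlinarith [norm_nonneg (z - b)]
  refine ⟨(cone a b r \ closedBall b r) ∩ {z | ⟪b - a, z - a⟫ < s},
          (cone a b r \ closedBall b r) ∩ {z | s < ⟪b - a, z - a⟫}, ?_, ?_, ?_, ?_, ?_, ?_⟩
  · ext z
    simp only [mem_union, mem_inter_iff, mem_setOf_eq]
    constructor
    · intro hz
      rcases lt_trichotomy ⟪b - a, z - a⟫ s with h | h | h
      · exact Or.inl ⟨hz, h⟩
      · exact absurd (hlevel z hz.1 h) hz.2
      · exact Or.inr ⟨hz, h⟩
    · rintro (⟨hz, _⟩ | ⟨hz, _⟩) <;> exact hz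
  · apply Set.disjoint_left.mpr
    rintro z ⟨-, h1'⟩ ⟨-, h2'⟩
    simp only [mem_setOf_eq] at h1' h2'
    exact absurd (h1'.trans h2') (lt_irrefl _)
  · refine ⟨⟨⟨0, le_refl 0, b, mem_closedBall_self h0.le, by simp⟩, ?_⟩, ?_⟩
    · simp only [mem_closedBall, dist_eq_norm, not_le]
      rwa [← norm_neg, neg_sub]
    · simp only [mem_setOf_eq, sub_self, inner_zero_right]; exact hs
  · -- bounded
    apply (isBounded_closedBall (x := a) (r := Real.sqrt s)).subset
    rintro z ⟨⟨hz, -⟩, hlt⟩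
    simp only [mem_setOf_eq] at hlt
    obtain ⟨hang, hnn⟩ := cone_angle a b r h0 h1 hz
    have h2 : ⟪b - a, z - a⟫^2 ≤ s^2 := by nlinarith
    have hza : ‖z - a‖^2 ≤ s := by nlinarith
    rw [mem_closedBall, dist_eq_norm]
    have := Real.sqrt_le_sqrt hza
    rwa [Real.sqrt_sq (norm_nonneg _)] at this
  · -- unbounded
    intro hB
    obtain ⟨R, hR⟩ := Bornology.IsBounded.exists_norm_le hB
    have hRnn : 0 ≤ R ∨ R < 0 := le_or_gt 0 R
    obtain ⟨α, hα2, hα'⟩ : ∃ α : ℝ, 2 ≤ α ∧ R + ‖a‖ + r ≤ α * ‖b - a‖ := by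
      refine ⟨(max R 0 + ‖a‖ + r) / ‖b - a‖ + 2, ?_, ?_⟩
      · have : 0 ≤ (max R 0 + ‖a‖ + r) / ‖b - a‖ := by positivity
        linarith
      rw [add_mul, div_mul_cancel₀ _ (ne_of_gt hd)]
      have : R ≤ max R 0 := le_max_left _ _
      nlinarith
    set p : E2 := a + α • (b - a) with hp_def
    have hpa : p - a = α • (b - a) := by rw [hp_def]; abel
    have hpmem : p ∈ (cone a b r \ closedBall b r) ∩ {z | s < ⟪b - a, z - a⟫} := by
      refine ⟨⟨⟨α, by linarith, b, mem_closedBall_self h0.le, rfl⟩, ?_⟩, ?_⟩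
      · simp only [mem_closedBall, dist_eq_norm, not_le]
        have hpb : p - b = (α - 1) • (b - a) := by rw [hp_def]; module
        rw [hpb, norm_smul, Real.norm_eq_abs, abs_of_nonneg (by linarith)]
        nlinarith
      · simp only [mem_setOf_eq, hpa, inner_smul_right, real_inner_self_eq_norm_sq]
        nlinarith
    have hle := hR p hpmem
    have hnp : α * ‖b - a‖ - ‖a‖ ≤ ‖p‖ := by
      have h1' : ‖α • (b - a)‖ ≤ ‖p‖ + ‖a‖ := by
        calc ‖α • (b - a)‖ = ‖p + (-a)‖ := by rw [hp_def]; congr 1; abel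
        _ ≤ ‖p‖ + ‖a‖ := by simpa using norm_add_le p (-a)
      rw [norm_smul, Real.norm_eq_abs, abs_of_nonneg (by linarith : (0:ℝ) ≤ α)] at h1'
      linarith
    nlinarith [norm_nonneg a]
  · -- path
    intro f hf hfc hf0 hf1
    have hcont : Continuous fun x : E2 => ⟪b - a, x - a⟫ :=
      continuous_const.inner (continuous_id.sub continuous_const)
    have hg : ContinuousOn (fun t => ⟪b - a, f t - a⟫) (Set.Icc 0 1) :=
      hcont.comp_continuousOn hf
    have h0' : ⟪b - a, f 0 - a⟫ < s := hf0.2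
    have h1' : s < ⟪b - a, f 1 - a⟫ := hf1.2
    have hIVT := intermediate_value_Icc (by norm_num : (0:ℝ) ≤ 1) hg
    obtain ⟨t, ht, hts⟩ := hIVT (mem_Icc.mpr ⟨le_of_lt h0', le_of_lt h1'⟩)
    exact ⟨t, ht, hlevel _ (hfc t ht) hts⟩
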